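/- Let K and L be convex bodies in ℝⁿ, u a regular unit normal vector common to a regular support element (x,u) of K, and let t ⊥ u be a unit vector. If K ∩ (x + span{u,t}) ⊆ K' for a planar convex body K' in the plane x + span{u,t} having (x,u) as a support element, then the upper radius of curvature of the section at (x,u) in direction t is at most the upper radius of curvature of K' at (x,u) in direction t. In particular, ρ_s(K,x,t) ≤ ρ̄_s(K,u,t), i.e., the upper sectional radius of curvature is at most the upper tangential radius of curvature. -/

import Mathlib

open scoped RealInnerProductSpace
open Metric Filter

/-- The radius of the circle through the origin and `p` with centre on the ray
spanned by minus the second coordinate direction, as an extended real number;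
`⊤` in the degenerate tangent case. -/
noncomputable def circRad (p : EuclideanSpace ℝ (Fin 2)) : EReal :=
  if p 1 = 0 then (⊤ : EReal)
  else (((p 0) ^ 2 + (p 1) ^ 2) / (2 * (-(p 1))) : ℝ)

/-- Upper radius of curvature of a planar convex body `M` having the support element
`(0, e₁)` (outer normal the second coordinate direction), in the tangent direction
given by the first coordinate direction. -/
noncomputable def uppRad (M : Set (EuclideanSpace ℝ (Fin 2))) : EReal :=
  Filter.limsup circRad (nhdsWithin 0 {p | p ∈ frontier M ∧ 0 < p 0})

noncomputable def vert (a s : ℝ) : EuclideanSpace ℝ (Fin 2) :=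
  (EuclideanSpace.equiv (Fin 2) ℝ).symm ![a, s]

lemma vert_apply0 (a s : ℝ) : vert a s 0 = a := by simp [vert]

lemma vert_apply1 (a s : ℝ) : vert a s 1 = s := by simp [vert]

lemma vert_eq_self (z : EuclideanSpace ℝ (Fin 2)) : vert (z 0) (z 1) = z := by
  unfold vert; ext i; fin_cases i <;> simp

lemma norm_vert_sq (a s : ℝ) : ‖vert a s‖ ^ 2 = a ^ 2 + s ^ 2 := by
  rw [← @real_inner_self_eq_norm_sq]
  rw [real_inner_self_eq_norm_sq, EuclideanSpace.norm_eq, Real.sq_sqrt (by positivity)]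
  simp [vert, Fin.sum_univ_two]

lemma norm_sq_eq (z : EuclideanSpace ℝ (Fin 2)) : ‖z‖ ^ 2 = (z 0) ^ 2 + (z 1) ^ 2 := by
  conv_lhs => rw [← vert_eq_self z]
  exact norm_vert_sq _ _

lemma continuous_vert (a : ℝ) : Continuous (fun s => vert a s) :=
  (EuclideanSpace.equiv (Fin 2) ℝ).symm.continuous.comp (by
    refine continuous_pi fun i => ?_
    fin_cases i <;> simp <;> fun_prop)

/-- From any point of a closed set lying in the lower half plane, moving vertically
upwards as far as possible yields a frontier point, no farther from the origin. -/
lemma exists_frontier_above {K' : Set (EuclideanSpace ℝ (Fin 2))}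
    (hc : IsClosed K') (hsup : ∀ p ∈ K', p 1 ≤ 0) {z : EuclideanSpace ℝ (Fin 2)}
    (hz : z ∈ K') :
    ∃ w ∈ frontier K', w 0 = z 0 ∧ z 1 ≤ w 1 ∧ w 1 ≤ 0 ∧ ‖w‖ ≤ ‖z‖ := by
  set S : Set ℝ := {s | vert (z 0) s ∈ K'} with hS
  have hzS : z 1 ∈ S := by simp only [hS, Set.mem_setOf_eq, vert_eq_self]; exact hz
  have hSle : ∀ s ∈ S, s ≤ 0 := by
    intro s hs
    have := hsup _ hs
    rwa [vert_apply1] at this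
  have hbdd : BddAbove S := ⟨0, hSle⟩
  have hne : S.Nonempty := ⟨z 1, hzS⟩
  have hSclosed : IsClosed S := hc.preimage (continuous_vert (z 0))
  set w1 := sSup S with hw1
  have hw1S : w1 ∈ S := hSclosed.csSup_mem hne hbdd
  have hle : z 1 ≤ w1 := le_csSup hbdd hzS
  have hw10 : w1 ≤ 0 := hSle _ hw1S
  refine ⟨vert (z 0) w1, ⟨?_, ?_⟩, vert_apply0 _ _, by simpa [vert_apply1] using hle,
    by simpa [vert_apply1] using hw10, ?_⟩
  · exact subset_closure hw1S
  · intro hint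
    rcases Metric.isOpen_iff.1 isOpen_interior _ hint with ⟨ε, hε, hball⟩
    have hmem : vert (z 0) (w1 + ε / 2) ∈ K' := by
      refine interior_subset (hball ?_)
      have hsub : vert (z 0) (w1 + ε / 2) - vert (z 0) w1 = vert 0 (ε / 2) := by
        unfold vert; ext i; fin_cases i <;> simp
      have hd : dist (vert (z 0) (w1 + ε / 2)) (vert (z 0) w1) = ε / 2 := by
        rw [dist_eq_norm, hsub]
        have h1 : ‖vert 0 (ε / 2)‖ ^ 2 = (ε / 2) ^ 2 := by rw [norm_vert_sq]; ring
        nlinarith [norm_nonneg (vert 0 (ε / 2))]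
      rw [mem_ball, hd]; linarith
    have : w1 + ε / 2 ≤ w1 := le_csSup hbdd hmem
    linarith
  · have h1 : ‖vert (z 0) w1‖ ^ 2 ≤ ‖z‖ ^ 2 := by
      rw [norm_vert_sq, norm_sq_eq]
      nlinarith
    nlinarith [norm_nonneg (vert (z 0) w1), norm_nonneg z]

/-- Monotonicity of the upper radius of curvature. -/
lemma uppRad_mono {M K' : Set (EuclideanSpace ℝ (Fin 2))}
    (hK'closed : IsClosed K') (hK'sup : ∀ p ∈ K', p 1 ≤ 0)
    (hMclosed : IsClosed M) (hMK' : M ⊆ K') : uppRad M ≤ uppRad K' := by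
  by_contra hcon
  push_neg at hcon
  obtain ⟨b, hb1, hb2⟩ := EReal.lt_iff_exists_real_btwn.1 hcon
  have hev : ∀ᶠ w in nhdsWithin 0 {p | p ∈ frontier K' ∧ 0 < p 0},
      circRad w < (b : EReal) := Filter.eventually_lt_of_limsup_lt hb1
  rw [nhdsWithin_basis_ball.eventually_iff] at hev
  obtain ⟨δ, hδ, hball⟩ := hev
  -- the core geometric step
  have core : ∀ z ∈ K', 0 < z 0 → ‖z‖ < δ →
      z 1 < 0 ∧ 0 < b ∧ ∃ w1, z 1 ≤ w1 ∧ w1 < 0 ∧ (z 0) ^ 2 + (w1 + b) ^ 2 < b ^ 2 := by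
    intro z hzK' hz0 hznorm
    obtain ⟨w, hwf, hw0, hw1le, hw1le0, hwnorm⟩ := exists_frontier_above hK'closed hK'sup hzK'
    have hwb : circRad w < (b : EReal) := by
      refine hball ⟨?_, hwf, ?_⟩
      · rw [mem_ball, dist_zero_right]; exact lt_of_le_of_lt hwnorm hznorm
      · rw [hw0]; exact hz0
    have hw1ne : w 1 ≠ 0 := by
      intro h
      rw [circRad, if_pos h] at hwb
      exact absurd hwb (by simp)
    have hw1lt : w 1 < 0 := lt_of_le_of_ne hw1le0 hw1ne
    rw [circRad, if_neg hw1ne] at hwb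
    have hreal : ((w 0) ^ 2 + (w 1) ^ 2) / (2 * (-(w 1))) < b := by
      exact_mod_cast hwb
    have hpos : (0 : ℝ) < 2 * (-(w 1)) := by linarith
    rw [div_lt_iff₀ hpos] at hreal
    rw [hw0] at hreal
    have hb0 : 0 < b := by nlinarith
    refine ⟨?_, hb0, w 1, hw1le, hw1lt, by nlinarith⟩
    rcases lt_or_eq_of_le (hK'sup z hzK') with h | h
    · exact h
    · exfalso; rw [h] at hw1le; linarith
  have hMle : uppRad M ≤ (b : EReal) := by
    refine Filter.limsup_le_of_le (by isBoundedDefault) ?_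
    rw [nhdsWithin_basis_ball.eventually_iff]
    rcases le_or_gt b 0 with hb0 | hb0
    · refine ⟨δ, hδ, ?_⟩
      rintro z ⟨hzb, hzf, hz0⟩
      exfalso
      have hzM : z ∈ M := hMclosed.frontier_subset hzf
      rw [mem_ball, dist_zero_right] at hzb
      obtain ⟨_, hbpos, _⟩ := core z (hMK' hzM) hz0 hzb
      linarith
    · refine ⟨min δ b, lt_min hδ hb0, ?_⟩
      rintro z ⟨hzb, hzf, hz0⟩
      have hzM : z ∈ M := hMclosed.frontier_subset hzf
      rw [mem_ball, dist_zero_right] at hzb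
      have hzδ : ‖z‖ < δ := lt_of_lt_of_le hzb (min_le_left _ _)
      have hzb' : ‖z‖ < b := lt_of_lt_of_le hzb (min_le_right _ _)
      obtain ⟨hz1, hbpos, w1, hw1le, hw1lt, hineq⟩ := core z (hMK' hzM) hz0 hzδ
      have hz1b : -b < z 1 := by
        have := norm_sq_eq z
        nlinarith [norm_nonneg z, sq_nonneg (z 0), mul_pos hbpos hbpos]
      rw [circRad, if_neg hz1.ne]
      have hdpos : (0 : ℝ) < 2 * (-(z 1)) := by linarith
      have : ((z 0) ^ 2 + (z 1) ^ 2) / (2 * (-(z 1))) < b := by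
        rw [div_lt_iff₀ hdpos]
        nlinarith
      exact_mod_cast this.le
  exact absurd hMle (not_le.2 hb2)

theorem sectional_le_tangential_upper_radius {n : ℕ}
    (K : Set (EuclideanSpace ℝ (Fin n)))
    (hKc : IsCompact K) (hKconv : Convex ℝ K)
    (x u t : EuclideanSpace ℝ (Fin n)) (hu : ‖u‖ = 1) (ht : ‖t‖ = 1) (hut : ⟪u, t⟫ = 0)
    (hxK : x ∈ K) (hsup : ∀ z ∈ K, ⟪z, u⟫ ≤ ⟪x, u⟫)
    (K' : Set (EuclideanSpace ℝ (Fin 2)))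
    (hK'c : IsCompact K') (hK'conv : Convex ℝ K')
    (hK'0 : (0 : EuclideanSpace ℝ (Fin 2)) ∈ K')
    (hK'sup : ∀ p ∈ K', p 1 ≤ 0)
    (hsec : ((fun p : EuclideanSpace ℝ (Fin 2) => x + p 0 • t + p 1 • u) ⁻¹' K) ⊆ K') :
    uppRad ((fun p : EuclideanSpace ℝ (Fin 2) => x + p 0 • t + p 1 • u) ⁻¹' K) ≤
        uppRad K' ∧
      uppRad ((fun p : EuclideanSpace ℝ (Fin 2) => x + p 0 • t + p 1 • u) ⁻¹' K) ≤
        uppRad ((fun z => (EuclideanSpace.equiv (Fin 2) ℝ).symm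
          ![⟪z - x, t⟫, ⟪z - x, u⟫]) '' K) := by
  have hcont : Continuous (fun p : EuclideanSpace ℝ (Fin 2) => x + p 0 • t + p 1 • u) := by
    fun_prop
  have hMclosed : IsClosed ((fun p : EuclideanSpace ℝ (Fin 2) =>
      x + p 0 • t + p 1 • u) ⁻¹' K) := hKc.isClosed.preimage hcont
  have hcont' : Continuous (fun z : EuclideanSpace ℝ (Fin n) =>
      (EuclideanSpace.equiv (Fin 2) ℝ).symm ![⟪z - x, t⟫, ⟪z - x, u⟫]) := by
    refine (EuclideanSpace.equiv (Fin 2) ℝ).symm.continuous.comp ?_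
    refine continuous_pi fun i => ?_
    fin_cases i <;> simp <;> fun_prop
  have himclosed : IsClosed ((fun z => (EuclideanSpace.equiv (Fin 2) ℝ).symm
      ![⟪z - x, t⟫, ⟪z - x, u⟫]) '' K) := (hKc.image hcont').isClosed
  have himsup : ∀ p ∈ ((fun z => (EuclideanSpace.equiv (Fin 2) ℝ).symm
      ![⟪z - x, t⟫, ⟪z - x, u⟫]) '' K), p 1 ≤ 0 := by
    rintro p ⟨z, hz, rfl⟩
    have : ((EuclideanSpace.equiv (Fin 2) ℝ).symm
        ![⟪z - x, t⟫, ⟪z - x, u⟫] : EuclideanSpace ℝ (Fin 2)) 1 = ⟪z - x, u⟫ := by simp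
    beta_reduce
    rw [this, inner_sub_left]
    have := hsup z hz
    linarith
  have hsub : ((fun p : EuclideanSpace ℝ (Fin 2) => x + p 0 • t + p 1 • u) ⁻¹' K) ⊆
      ((fun z => (EuclideanSpace.equiv (Fin 2) ℝ).symm ![⟪z - x, t⟫, ⟪z - x, u⟫]) '' K) := by
    intro p hp
    refine ⟨x + p 0 • t + p 1 • u, hp, ?_⟩
    have hd : x + p 0 • t + p 1 • u - x = p 0 • t + p 1 • u := by abel
    have htt : ⟪t, t⟫ = (1 : ℝ) := by
      rw [real_inner_self_eq_norm_sq, ht]; norm_num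
    have huu : ⟪u, u⟫ = (1 : ℝ) := by
      rw [real_inner_self_eq_norm_sq, hu]; norm_num
    have htu : ⟪t, u⟫ = (0 : ℝ) := by rw [real_inner_comm]; exact hut
    have h0 : ⟪x + p 0 • t + p 1 • u - x, t⟫ = p 0 := by
      rw [hd, inner_add_left, real_inner_smul_left, real_inner_smul_left, htt, hut]
      ring
    have h1 : ⟪x + p 0 • t + p 1 • u - x, u⟫ = p 1 := by
      rw [hd, inner_add_left, real_inner_smul_left, real_inner_smul_left, huu, htu]
      ring
    beta_reduce
    rw [h0, h1]
    ext i; fin_cases i <;> simp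
  exact ⟨uppRad_mono hK'c.isClosed hK'sup hMclosed hsec,
    uppRad_mono himclosed himsup hMclosed hsub⟩
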